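/- The bilinear form b of the first-order mixed formulation satisfies the inf-sup condition: inf over (λ,μ) ∈ X of sup over (y,p) ∈ U of b((y,p),(λ,μ))/(‖(y,p)‖_U ‖(λ,μ)‖_X) is at least δ := (max{C_{Ω,T}ρ⋆⁻²‖ρ₁‖²_{L^∞(Q_T)} + η₁, C_{Ω,T}ρ⋆⁻²‖ρ‖²_{L^∞(Q_T)} + η₂})^{−1/2}. -/
import Mathlib


open scoped RealInnerProductSpace

/-!
Abstract formalization of the inf-sup property (3.8) of Cîndea–Münch for the
first-order mixed formulation.

Setting (see Statement 9): `U` is the completion of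
`U₀ = {(y,p) ∈ C¹(Q̄_T) × C¹(Q̄_T)^N : y = 0 on Σ_T}` for the `U`-norm
`‖(y,p)‖²_U = ‖ρ₀⁻¹ y‖²_{L²(q_T)} + η₁‖ρ₁⁻¹J(y,p)‖² + η₂‖ρ⁻¹I(y,p)‖²`
(hypothesis `hnormU`); `X = L²(Q_T) × L²(Q_T)^N = HQ × VQ` with
`‖(λ,μ)‖_X = √(‖λ‖² + ‖μ‖²)`; `obsU u = ρ₀⁻¹ y|_{q_T}`,
`Jm u = ρ₁⁻¹ J(y,p)`, `Im u = ρ⁻¹ I(y,p)`;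
`b(u,(λ,μ)) = ⟪Jm u, μ⟫ + ⟪Im u, λ⟫`.
`hsolveU` is the energy estimate for the first-order system with zero
initial/boundary data and sources `(ρλ⁰, ρ₁μ⁰)` (constant `C_{Ω,T}`,
`Mρ = ‖ρ‖_∞`, `Mρ₁ = ‖ρ₁‖_∞`).

Statement: `b` satisfies the inf-sup condition: for every `(λ,μ) ≠ 0`,
`sup_{(y,p) ∈ U} b((y,p),(λ,μ))/(‖(y,p)‖_U ‖(λ,μ)‖_X) ≥ δ` with
`δ = (max{C_{Ω,T}ρ⋆⁻²‖ρ₁‖²_∞ + η₁, C_{Ω,T}ρ⋆⁻²‖ρ‖²_∞ + η₂})^{−1/2}`.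
-/
set_option maxHeartbeats 2000000 in
theorem firstOrder_infSup_property
    {U HQ VQ Hq : Type*}
    [NormedAddCommGroup U] [InnerProductSpace ℝ U] [CompleteSpace U]
    [NormedAddCommGroup HQ] [InnerProductSpace ℝ HQ] [CompleteSpace HQ]
    [NormedAddCommGroup VQ] [InnerProductSpace ℝ VQ] [CompleteSpace VQ]
    [NormedAddCommGroup Hq] [InnerProductSpace ℝ Hq] [CompleteSpace Hq]
    (obsU : U →L[ℝ] Hq) (Jm : U →L[ℝ] VQ) (Im : U →L[ℝ] HQ)
    (η₁ η₂ : ℝ) (hη₁ : 0 < η₁) (hη₂ : 0 < η₂)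
    (ρstar Mρ Mρ₁ CΩT : ℝ)
    (hρstar : 0 < ρstar) (hMρ : 0 < Mρ) (hMρ₁ : 0 < Mρ₁) (hCΩT : 0 < CΩT)
    (hnormU : ∀ u : U,
      ‖u‖ ^ 2 = ‖obsU u‖ ^ 2 + η₁ * ‖Jm u‖ ^ 2 + η₂ * ‖Im u‖ ^ 2)
    (hsolveU : ∀ (lam : HQ) (mu : VQ), ∃ u : U, Im u = lam ∧ Jm u = mu ∧
      ‖obsU u‖ ^ 2 ≤
        CΩT * ρstar⁻¹ ^ 2 * (Mρ ^ 2 * ‖lam‖ ^ 2 + Mρ₁ ^ 2 * ‖mu‖ ^ 2)) :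
    ∀ (lam : HQ) (mu : VQ), ¬(lam = 0 ∧ mu = 0) →
      (Real.sqrt (max (CΩT * ρstar⁻¹ ^ 2 * Mρ₁ ^ 2 + η₁)
          (CΩT * ρstar⁻¹ ^ 2 * Mρ ^ 2 + η₂)))⁻¹ ≤
        ⨆ u : U, (⟪Jm u, mu⟫ + ⟪Im u, lam⟫) /
          (‖u‖ * Real.sqrt (‖lam‖ ^ 2 + ‖mu‖ ^ 2)) := by
  intro lam mu hne
  set M := max (CΩT * ρstar⁻¹ ^ 2 * Mρ₁ ^ 2 + η₁)
      (CΩT * ρstar⁻¹ ^ 2 * Mρ ^ 2 + η₂) with hM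
  have hMpos : 0 < M := lt_of_lt_of_le (by positivity) (le_max_left _ _)
  set S := ‖lam‖ ^ 2 + ‖mu‖ ^ 2 with hSdef
  have hSpos : 0 < S := by
    rcases not_and_or.mp hne with h | h
    · have h' : 0 < ‖lam‖ := norm_pos_iff.mpr h
      have h'' : (0:ℝ) ≤ ‖mu‖ := norm_nonneg _
      positivity
    · have h' : 0 < ‖mu‖ := norm_pos_iff.mpr h
      have h'' : (0:ℝ) ≤ ‖lam‖ := norm_nonneg _
      positivity
  have hsS : 0 < Real.sqrt S := Real.sqrt_pos.mpr hSpos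
  set K : ℝ := ((Real.sqrt η₁)⁻¹ * ‖mu‖ + (Real.sqrt η₂)⁻¹ * ‖lam‖) / Real.sqrt S
    with hK
  have hbdd : ∀ u : U, (⟪Jm u, mu⟫ + ⟪Im u, lam⟫) /
      (‖u‖ * Real.sqrt S) ≤ K := by
    intro u
    by_cases hu : u = 0
    · subst hu
      simp only [map_zero, inner_zero_left, add_zero, norm_zero, zero_mul,
        div_zero]
      positivity
    · have hupos : 0 < ‖u‖ := norm_pos_iff.mpr hu
      have hs1 : 0 < Real.sqrt η₁ := Real.sqrt_pos.mpr hη₁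
      have hs2 : 0 < Real.sqrt η₂ := Real.sqrt_pos.mpr hη₂
      have hJ : Real.sqrt η₁ * ‖Jm u‖ ≤ ‖u‖ := by
        have h2 : (Real.sqrt η₁ * ‖Jm u‖) ^ 2 ≤ ‖u‖ ^ 2 := by
          rw [mul_pow, Real.sq_sqrt hη₁.le]
          nlinarith [hnormU u, sq_nonneg ‖obsU u‖, sq_nonneg ‖Im u‖]
        have h3 := Real.sqrt_le_sqrt h2
        rwa [Real.sqrt_sq (by positivity), Real.sqrt_sq (norm_nonneg _)] at h3
      have hI : Real.sqrt η₂ * ‖Im u‖ ≤ ‖u‖ := by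
        have h2 : (Real.sqrt η₂ * ‖Im u‖) ^ 2 ≤ ‖u‖ ^ 2 := by
          rw [mul_pow, Real.sq_sqrt hη₂.le]
          nlinarith [hnormU u, sq_nonneg ‖obsU u‖, sq_nonneg ‖Jm u‖]
        have h3 := Real.sqrt_le_sqrt h2
        rwa [Real.sqrt_sq (by positivity), Real.sqrt_sq (norm_nonneg _)] at h3
      have hJ' : ‖Jm u‖ ≤ (Real.sqrt η₁)⁻¹ * ‖u‖ := (le_inv_mul_iff₀ hs1).mpr hJ
      have hI' : ‖Im u‖ ≤ (Real.sqrt η₂)⁻¹ * ‖u‖ := (le_inv_mul_iff₀ hs2).mpr hI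
      have hnum : ⟪Jm u, mu⟫ + ⟪Im u, lam⟫ ≤
          ((Real.sqrt η₁)⁻¹ * ‖mu‖ + (Real.sqrt η₂)⁻¹ * ‖lam‖) * ‖u‖ := by
        have h1 := real_inner_le_norm (Jm u) mu
        have h2 := real_inner_le_norm (Im u) lam
        nlinarith [norm_nonneg mu, norm_nonneg lam, norm_nonneg (Jm u),
          norm_nonneg (Im u)]
      rw [hK, div_le_div_iff₀ (by positivity) hsS]
      nlinarith [mul_le_mul_of_nonneg_right hnum hsS.le]
  obtain ⟨u, hIm, hJm, hobs⟩ := hsolveU lam mu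
  have hune : u ≠ 0 := by
    rintro rfl
    simp only [map_zero] at hIm hJm
    exact hne ⟨hIm.symm, hJm.symm⟩
  have hupos : 0 < ‖u‖ := norm_pos_iff.mpr hune
  have hb : ⟪Jm u, mu⟫ + ⟪Im u, lam⟫ = S := by
    rw [hIm, hJm, real_inner_self_eq_norm_sq, real_inner_self_eq_norm_sq, hSdef]
    ring
  have hnu2 : ‖u‖ ^ 2 ≤ M * S := by
    have h1 : CΩT * ρstar⁻¹ ^ 2 * Mρ₁ ^ 2 + η₁ ≤ M := le_max_left _ _
    have h2 : CΩT * ρstar⁻¹ ^ 2 * Mρ ^ 2 + η₂ ≤ M := le_max_right _ _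
    have h3 := mul_le_mul_of_nonneg_right h1 (sq_nonneg ‖mu‖)
    have h4 := mul_le_mul_of_nonneg_right h2 (sq_nonneg ‖lam‖)
    have hexp : M * S = M * ‖lam‖ ^ 2 + M * ‖mu‖ ^ 2 := by
      rw [hSdef]; ring
    rw [hnormU u, hJm, hIm, hexp]
    have h5 : (CΩT * ρstar⁻¹ ^ 2 * Mρ₁ ^ 2 + η₁) * ‖mu‖ ^ 2
        = CΩT * ρstar⁻¹ ^ 2 * Mρ₁ ^ 2 * ‖mu‖ ^ 2 + η₁ * ‖mu‖ ^ 2 := by ring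
    have h6 : (CΩT * ρstar⁻¹ ^ 2 * Mρ ^ 2 + η₂) * ‖lam‖ ^ 2
        = CΩT * ρstar⁻¹ ^ 2 * Mρ ^ 2 * ‖lam‖ ^ 2 + η₂ * ‖lam‖ ^ 2 := by ring
    have h7 : CΩT * ρstar⁻¹ ^ 2 * (Mρ ^ 2 * ‖lam‖ ^ 2 + Mρ₁ ^ 2 * ‖mu‖ ^ 2)
        = CΩT * ρstar⁻¹ ^ 2 * Mρ ^ 2 * ‖lam‖ ^ 2
          + CΩT * ρstar⁻¹ ^ 2 * Mρ₁ ^ 2 * ‖mu‖ ^ 2 := by ring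
    rw [h5] at h3
    rw [h6] at h4
    rw [h7] at hobs
    linarith
  have hnu : ‖u‖ ≤ Real.sqrt M * Real.sqrt S := by
    rw [← Real.sqrt_mul hMpos.le]
    have h3 := Real.sqrt_le_sqrt hnu2
    rwa [Real.sqrt_sq (norm_nonneg _)] at h3
  have hsM : 0 < Real.sqrt M := Real.sqrt_pos.mpr hMpos
  have key : (Real.sqrt M)⁻¹ ≤ (⟪Jm u, mu⟫ + ⟪Im u, lam⟫) /
      (‖u‖ * Real.sqrt S) := by
    rw [hb, le_div_iff₀ (by positivity)]
    have h4 : (Real.sqrt M)⁻¹ * (‖u‖ * Real.sqrt S) ≤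
        (Real.sqrt M)⁻¹ * (Real.sqrt M * Real.sqrt S * Real.sqrt S) := by
      gcongr
    have h5 : (Real.sqrt M)⁻¹ * (Real.sqrt M * Real.sqrt S * Real.sqrt S) = S := by
      rw [show (Real.sqrt M)⁻¹ * (Real.sqrt M * Real.sqrt S * Real.sqrt S)
          = ((Real.sqrt M)⁻¹ * Real.sqrt M) * (Real.sqrt S * Real.sqrt S) by ring,
        inv_mul_cancel₀ hsM.ne', one_mul, Real.mul_self_sqrt hSpos.le]
    linarith
  exact le_ciSup_of_le ⟨K, by rintro x ⟨v, rfl⟩; exact hbdd v⟩ u key
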